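/- Let H(z) ∈ 𝔽₂[z] satisfy z^{2n−2} H(1/z) = H(z) (as Laurent polynomials), let n ≥ 3, and let α be a primitive element of 𝔽_{2^n}. If H(α) = 0 and deg H ≤ 2n−2, then H = 0. -/

import Mathlib

open Polynomial

lemma aux_num {n i j : ℕ} (hn : 3 ≤ n) (hi : i < n) (hj : j < n) :
    ¬ (2 ^ n - 1 ∣ 2 ^ i + 2 ^ j) := by
  intro h
  have h1 : 2 ^ i ≤ 2 ^ (n - 1) := Nat.pow_le_pow_right (by norm_num) (by omega)
  have h2 : 2 ^ j ≤ 2 ^ (n - 1) := Nat.pow_le_pow_right (by norm_num) (by omega)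
  have h3 : 2 ^ n = 2 * 2 ^ (n - 1) := by
    conv_lhs => rw [show n = (n - 1) + 1 by omega]
    rw [pow_succ]; ring
  have h4 : (4 : ℕ) ≤ 2 ^ (n - 1) := by
    calc (4 : ℕ) = 2 ^ 2 := by norm_num
    _ ≤ 2 ^ (n - 1) := Nat.pow_le_pow_right (by norm_num) (by omega)
  have hc2 : 2 ^ (n - 1) = 2 * 2 ^ (n - 2) := by
    conv_lhs => rw [show n - 1 = (n - 2) + 1 by omega]
    rw [pow_succ]; ring
  have hi1 : 1 ≤ 2 ^ i := Nat.one_le_two_pow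
  have hj1 : 1 ≤ 2 ^ j := Nat.one_le_two_pow
  -- force the sum to be 2^n - 1
  obtain ⟨k, hk⟩ := h
  have heq : 2 ^ i + 2 ^ j = 2 ^ n - 1 := by
    rcases k with _ | _ | k
    · omega
    · omega
    · have := Nat.mul_le_mul_left (2 ^ n - 1) (show 2 ≤ k + 1 + 1 by omega)
      omega
  -- parity analysis
  rcases Nat.eq_zero_or_pos i with i0 | ipos
  · rcases Nat.eq_zero_or_pos j with j0 | jpos
    · subst i0 j0; omega
    · subst i0
      rcases Nat.lt_or_ge j 2 with j1 | j2
      · interval_cases j <;> omega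
      · have : 2 ^ j = 4 * 2 ^ (j - 2) := by
          conv_lhs => rw [show j = (j - 2) + 2 by omega]
          rw [pow_add]; ring
        have hd : 2 ≤ 2 ^ (n - 2) := Nat.one_lt_two_pow_iff.mpr (by omega)
        omega
  · rcases Nat.eq_zero_or_pos j with j0 | jpos
    · subst j0
      rcases Nat.lt_or_ge i 2 with i1 | i2
      · interval_cases i <;> omega
      · have : 2 ^ i = 4 * 2 ^ (i - 2) := by
          conv_lhs => rw [show i = (i - 2) + 2 by omega]
          rw [pow_add]; ring
        have hd : 2 ≤ 2 ^ (n - 2) := Nat.one_lt_two_pow_iff.mpr (by omega)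
        omega
    · have hie : 2 ^ i = 2 * 2 ^ (i - 1) := by
        conv_lhs => rw [show i = (i - 1) + 1 by omega]
        rw [pow_succ]; ring
      have hje : 2 ^ j = 2 * 2 ^ (j - 1) := by
        conv_lhs => rw [show j = (j - 1) + 1 by omega]
        rw [pow_succ]; ring
      omega

/-- Let `n ≥ 3` and `α` a primitive element of `𝔽_{2^n}`. If `H ∈ 𝔽₂[z]` satisfies
`z^(2n−2) H(1/z) = H(z)` (i.e. `reflect (2n−2) H = H`), `deg H ≤ 2n−2`, and `H(α) = 0`,
then `H = 0`. -/
theorem stmt10 {n : ℕ} (hn : 3 ≤ n) (F : Type*) [Field F] [Fintype F]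
    [Algebra (ZMod 2) F] (hcard : Fintype.card F = 2 ^ n)
    (α : F) (hα : orderOf α = 2 ^ n - 1)
    (H : Polynomial (ZMod 2))
    (hdeg : H.natDegree ≤ 2 * n - 2)
    (hrec : H.reflect (2 * n - 2) = H)
    (hroot : aeval α H = 0) :
    H = 0 := by
  classical
  by_contra hH
  set q : ZMod 2 →+* F := algebraMap (ZMod 2) F with hq
  have hqinj : Function.Injective q := (algebraMap (ZMod 2) F).injective
  set Hm : F[X] := H.map q with hHm
  have hMne : Hm ≠ 0 := Polynomial.map_ne_zero hH
  have h2n1 : 4 ≤ 2 ^ n - 1 := by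
    have : 2 ^ 3 ≤ 2 ^ n := Nat.pow_le_pow_right (by norm_num) hn
    omega
  have hα0 : α ≠ 0 := by
    intro h
    have h1 : α ^ (2 ^ n - 1) = 1 := by rw [← hα]; exact pow_orderOf_eq_one α
    rw [h, zero_pow (by omega)] at h1
    exact zero_ne_one h1
  haveI : CharP F 2 := charP_of_injective_ringHom hqinj 2
  -- Hm is fixed by coefficientwise Frobenius
  have hfrob : Hm.map (frobenius F 2) = Hm := by
    ext k
    have hz : ∀ c : ZMod 2, c ^ 2 = c := by decide
    simp only [hHm, Polynomial.coeff_map, frobenius_def]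
    rw [← map_pow, hz]
  -- squaring roots
  have hsq : ∀ x : F, Hm.eval (x ^ 2) = (Hm.eval x) ^ 2 := by
    intro x
    have hx : Polynomial.expand F 2 Hm = Hm ^ 2 := by
      have h := Polynomial.map_frobenius_expand 2 Hm
      rwa [Polynomial.map_expand, hfrob] at h
    rw [← Polynomial.expand_eval, hx, Polynomial.eval_pow]
  have hiter : ∀ x : F, Hm.eval x = 0 → ∀ i : ℕ, Hm.eval (x ^ 2 ^ i) = 0 := by
    intro x hx i
    induction i with
    | zero => simpa using hx
    | succ i ih =>
        rw [pow_succ, pow_mul, hsq, ih]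
        ring
  have hα_root : Hm.eval α = 0 := by
    rw [hHm, Polynomial.eval_map, ← Polynomial.aeval_def, hroot]
  have hαinv_root : Hm.eval α⁻¹ = 0 := by
    have : Invertible α := invertibleOfNonzero hα0
    have h := (Polynomial.eval₂_reflect_eq_zero_iff q α (2 * n - 2) H hdeg).mpr
      (by rw [← Polynomial.aeval_def]; exact hroot)
    rw [hrec, invOf_eq_inv] at h
    rw [hHm, Polynomial.eval_map]
    exact h
  -- the finset of roots
  set s : Finset F :=
    ((Finset.range n).image fun i => α ^ 2 ^ i) ∪
    ((Finset.range n).image fun i => α⁻¹ ^ 2 ^ i) with hs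
  have hlt : ∀ i < n, 2 ^ i < 2 ^ n - 1 := by
    intro i hi
    have h1 : 2 ^ i ≤ 2 ^ (n - 1) := Nat.pow_le_pow_right (by norm_num) (by omega)
    have h3 : 2 ^ n = 2 * 2 ^ (n - 1) := by
      conv_lhs => rw [show n = (n - 1) + 1 by omega]
      rw [pow_succ]; ring
    have h4 : (4 : ℕ) ≤ 2 ^ (n - 1) := by
      calc (4 : ℕ) = 2 ^ 2 := by norm_num
      _ ≤ 2 ^ (n - 1) := Nat.pow_le_pow_right (by norm_num) (by omega)
    omega
  have hinj : ∀ β : F, β ≠ 0 → orderOf β = 2 ^ n - 1 →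
      Set.InjOn (fun i => β ^ 2 ^ i) (Finset.range n) := by
    intro β hβ0 hβ i hi j hj hij
    simp only [Finset.coe_range, Set.mem_Iio] at hi hj
    have hij' : β ^ 2 ^ i = β ^ 2 ^ j := hij
    have key : ∀ a b : ℕ, a ≤ b → b < 2 ^ n - 1 → β ^ a = β ^ b → a = b := by
      intro a b hab hb h
      have h0 : β ^ a * β ^ (b - a) = β ^ a * 1 := by
        rw [mul_one, ← pow_add, show a + (b - a) = b by omega]
        exact h.symm
      have h1 : β ^ (b - a) = 1 := mul_left_cancel₀ (pow_ne_zero _ hβ0) h0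
      have h2 := orderOf_dvd_of_pow_eq_one h1
      rw [hβ] at h2
      rcases Nat.eq_zero_or_pos (b - a) with h3 | h3
      · omega
      · have := Nat.le_of_dvd h3 h2
        omega
    apply Nat.pow_right_injective (le_refl 2)
    rcases le_total (2 ^ i) (2 ^ j) with hle | hle
    · exact key _ _ hle (hlt j hj) hij'
    · exact (key _ _ hle (hlt i hi) hij'.symm).symm
  have hcard1 : ((Finset.range n).image fun i => α ^ 2 ^ i).card = n := by
    rw [Finset.card_image_of_injOn (hinj α hα0 hα), Finset.card_range]
  have hcard2 : ((Finset.range n).image fun i => α⁻¹ ^ 2 ^ i).card = n := by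
    rw [Finset.card_image_of_injOn (hinj α⁻¹ (inv_ne_zero hα0) (by rw [← hα, orderOf_eq_orderOf_iff]; intro k; rw [inv_pow, inv_eq_one])), Finset.card_range]
  have hdisj : Disjoint ((Finset.range n).image fun i => α ^ 2 ^ i)
      ((Finset.range n).image fun i => α⁻¹ ^ 2 ^ i) := by
    rw [Finset.disjoint_left]
    rintro x hx1 hx2
    simp only [Finset.mem_image, Finset.mem_range] at hx1 hx2
    obtain ⟨i, hi, hix⟩ := hx1
    obtain ⟨j, hj, hjx⟩ := hx2
    have h1 : α ^ (2 ^ i + 2 ^ j) = 1 := by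
      rw [pow_add, hix]
      rw [← hjx, inv_pow, mul_comm, mul_inv_cancel₀]
      exact pow_ne_zero _ hα0
    exact aux_num hn hi hj (hα ▸ orderOf_dvd_of_pow_eq_one h1)
  have hscard : s.card = 2 * n := by
    rw [hs, Finset.card_union_of_disjoint hdisj, hcard1, hcard2]; ring
  have hsub : s ⊆ Hm.roots.toFinset := by
    intro x hx
    rw [Multiset.mem_toFinset, Polynomial.mem_roots hMne]
    simp only [hs, Finset.mem_union, Finset.mem_image, Finset.mem_range] at hx
    rcases hx with ⟨i, _, rfl⟩ | ⟨i, _, rfl⟩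
    · exact hiter α hα_root i
    · exact hiter α⁻¹ hαinv_root i
  have hle : s.card ≤ Hm.natDegree :=
    le_trans (Finset.card_le_card hsub)
      (le_trans (Multiset.toFinset_card_le _) (Polynomial.card_roots' Hm))
  have hdegm : Hm.natDegree ≤ 2 * n - 2 := le_trans Polynomial.natDegree_map_le hdeg
  omega
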